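/- Let (f_k)_{k≥0} be a real sequence with Σ_{k≥0}(1+k)^{3/2} f_k² < ∞ and Σ_{k≥0} f_k = 0 (this series converges absolutely). Define h_n = Σ_{k=0}^{n} E_{n−k} f_k. Then there is a constant C > 0 such that |h_n| ≤ C n^{−3/4} (log n)^{1/2} for all n ≥ 2. -/

import Mathlib

open scoped BigOperators

/-- `E_m = (2m)! / (2^{2m} (m!)^2) = C(2m,m) / 4^m`. -/
noncomputable def Ecoef (m : ℕ) : ℝ := (Nat.choose (2 * m) m : ℝ) / 4 ^ m

namespace Stmt0Aux

lemma Ecoef_pos (m : ℕ) : 0 < Ecoef m := by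
  have h : 0 < (2 * m).choose m := Nat.choose_pos (by omega)
  unfold Ecoef
  have : (0:ℝ) < ((2*m).choose m : ℝ) := by exact_mod_cast h
  positivity

lemma Ecoef_succ (m : ℕ) : Ecoef (m + 1) = Ecoef m * (2 * m + 1) / (2 * m + 2) := by
  have h := Nat.succ_mul_centralBinom_succ m
  have h' : ((m:ℝ) + 1) * ((2*(m+1)).choose (m+1) : ℝ) = 2 * (2*m+1) * ((2*m).choose m : ℝ) := by
    exact_mod_cast congrArg (Nat.cast : ℕ → ℝ) h
  unfold Ecoef
  have hm : ((m:ℝ) + 1) ≠ 0 := by positivity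
  rw [pow_succ]
  field_simp
  linear_combination 2 * h'

lemma Ecoef_anti : ∀ {a b : ℕ}, a ≤ b → Ecoef b ≤ Ecoef a := by
  have step : ∀ m, Ecoef (m+1) ≤ Ecoef m := by
    intro m
    rw [Ecoef_succ]
    have h := (Ecoef_pos m).le
    have h2 : (0:ℝ) < 2*m+2 := by positivity
    rw [div_le_iff₀ h2]
    nlinarith
  intro a b hab
  induction b with
  | zero => simp_all
  | succ b ih =>
    rcases Nat.lt_or_ge a (b+1) with h | h
    · exact le_trans (step b) (ih (by omega))
    · have : a = b + 1 := by omega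
      simp [this]

lemma Ecoef_le_inv_sqrt (m : ℕ) : Ecoef m ≤ (Real.sqrt ((m:ℝ) + 1))⁻¹ := by
  induction m with
  | zero => simp [Ecoef]
  | succ m ih =>
    have hs1 : (0:ℝ) < Real.sqrt ((m:ℝ)+1) := Real.sqrt_pos.2 (by positivity)
    have hs2 : (0:ℝ) < Real.sqrt ((m:ℝ)+2) := Real.sqrt_pos.2 (by positivity)
    have e1 : (2*(m:ℝ)+1) * Real.sqrt ((m:ℝ)+2) = Real.sqrt ((2*(m:ℝ)+1)^2 * ((m:ℝ)+2)) := by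
      rw [Real.sqrt_mul (sq_nonneg _), Real.sqrt_sq (by positivity)]
    have e2 : (2*(m:ℝ)+2) * Real.sqrt ((m:ℝ)+1) = Real.sqrt ((2*(m:ℝ)+2)^2 * ((m:ℝ)+1)) := by
      rw [Real.sqrt_mul (sq_nonneg _), Real.sqrt_sq (by positivity)]
    have h3 : (2*(m:ℝ)+1) * Real.sqrt ((m:ℝ)+2) ≤ (2*(m:ℝ)+2) * Real.sqrt ((m:ℝ)+1) := by
      rw [e1, e2]
      exact Real.sqrt_le_sqrt (by nlinarith [sq_nonneg ((m:ℝ))])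
    have key : (Real.sqrt ((m:ℝ)+1))⁻¹ * (2*m+1) / (2*m+2) ≤ (Real.sqrt ((m:ℝ)+2))⁻¹ := by
      rw [inv_eq_one_div, inv_eq_one_div, div_mul_eq_mul_div, div_div,
        div_le_div_iff₀ (by positivity) (by positivity)]
      nlinarith [h3]
    calc Ecoef (m+1) = Ecoef m * (2*m+1) / (2*m+2) := Ecoef_succ m
      _ ≤ (Real.sqrt ((m:ℝ)+1))⁻¹ * (2*m+1) / (2*m+2) := by
          gcongr
      _ ≤ (Real.sqrt ((m:ℝ)+2))⁻¹ := key
      _ = (Real.sqrt (((m+1:ℕ):ℝ)+1))⁻¹ := by push_cast; ring_nf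

lemma Ecoef_diff (m : ℕ) : Ecoef m - Ecoef (m+1) ≤ (((m:ℝ)+1) * Real.sqrt ((m:ℝ)+1))⁻¹ / 2 := by
  have h := Ecoef_succ m
  have hle := Ecoef_le_inv_sqrt m
  have hs1 : (0:ℝ) < Real.sqrt ((m:ℝ)+1) := Real.sqrt_pos.2 (by positivity)
  have : Ecoef m - Ecoef (m+1) = Ecoef m / (2*m+2) := by
    rw [h]; field_simp; ring
  rw [this]
  rw [div_le_iff₀ (by positivity)]
  calc Ecoef m ≤ (Real.sqrt ((m:ℝ)+1))⁻¹ := hle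
    _ = (((m:ℝ)+1) * Real.sqrt ((m:ℝ)+1))⁻¹ / 2 * (2*↑m+2) := by
        have hq1 : (Real.sqrt ((m:ℝ)+1))^2 = (m:ℝ)+1 := Real.sq_sqrt (by positivity)
        field_simp

/-- telescoping bound on differences of Ecoef -/
lemma Ecoef_diff_sum {a b : ℕ} (hab : a ≤ b) :
    Ecoef a - Ecoef b ≤ ∑ j ∈ Finset.Ico a b, (((j:ℝ)+1) * Real.sqrt ((j:ℝ)+1))⁻¹ / 2 := by
  induction b with
  | zero =>
    have : a = 0 := by omega
    simp [this]
  | succ b ih =>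
    rcases Nat.lt_or_ge a (b+1) with h | h
    · have hab' : a ≤ b := by omega
      have := ih hab'
      rw [Finset.sum_Ico_succ_top hab']
      have hd := Ecoef_diff b
      linarith
    · have : a = b + 1 := by omega
      simp [this]

/-- harmonic sums -/
lemma harmonic_le (M : ℕ) (hM : 1 ≤ M) :
    ∑ m ∈ Finset.range M, (1:ℝ)/((m:ℝ)+1) ≤ 1 + Real.log M := by
  induction M with
  | zero => omega
  | succ M ih =>
    rcases Nat.lt_or_ge M 1 with h | h
    · have : M = 0 := by omega
      subst this
      simp
    · have hM0 : (0:ℝ) < M := by exact_mod_cast h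
      have step : (1:ℝ)/((M:ℝ)+1) ≤ Real.log ((M:ℝ)+1) - Real.log M := by
        have hx : (0:ℝ) < (M:ℝ)/((M:ℝ)+1) := by positivity
        have := Real.log_le_sub_one_of_pos hx
        rw [Real.log_div (by positivity) (by positivity)] at this
        have h1 : (M:ℝ)/((M:ℝ)+1) - 1 = -(1/((M:ℝ)+1)) := by field_simp; ring
        linarith [h1 ▸ this]
      rw [Finset.sum_range_succ]
      push_cast
      have := ih h
      linarith

/-- per-term telescoping bound for the tail sum -/
lemma inv_pow32_le_telescope (j : ℕ) (hj : 1 ≤ j) :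
    ((1:ℝ) + (j:ℝ)) ^ (-(3:ℝ)/2) ≤ 2 * ((Real.sqrt j)⁻¹ - (Real.sqrt ((j:ℝ)+1))⁻¹) := by
  have ha : (0:ℝ) < Real.sqrt j := Real.sqrt_pos.2 (by exact_mod_cast hj)
  have hb : (0:ℝ) < Real.sqrt ((j:ℝ)+1) := Real.sqrt_pos.2 (by positivity)
  have ha2 : (Real.sqrt (j:ℝ))^2 = (j:ℝ) := Real.sq_sqrt (by positivity)
  have hb2 : (Real.sqrt ((j:ℝ)+1))^2 = (j:ℝ)+1 := Real.sq_sqrt (by positivity)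
  have hab : Real.sqrt (j:ℝ) ≤ Real.sqrt ((j:ℝ)+1) := Real.sqrt_le_sqrt (by linarith)
  have hL : ((1:ℝ) + (j:ℝ)) ^ (-(3:ℝ)/2) = (((j:ℝ)+1) * Real.sqrt ((j:ℝ)+1))⁻¹ := by
    rw [show (1:ℝ) + (j:ℝ) = (j:ℝ)+1 by ring,
      show (-(3:ℝ)/2) = -(3/2) by norm_num, Real.rpow_neg (by positivity)]
    congr 1
    rw [show (3:ℝ)/2 = 1 + 1/2 by norm_num, Real.rpow_add (by positivity), Real.rpow_one,
      ← Real.sqrt_eq_rpow]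
  rw [hL]
  rw [inv_le_iff_one_le_mul₀ (by positivity)]
  set a := Real.sqrt (j:ℝ) with ha'
  set b := Real.sqrt ((j:ℝ)+1) with hb'
  have hdiff : (b - a) * (b + a) = 1 := by nlinarith
  have hba : 0 ≤ b - a := by linarith
  have expand : (a⁻¹ - b⁻¹) = (b - a) / (a * b) := by field_simp
  have step1 : (j:ℝ) + 1 = b^2 := hb2.symm
  have key : a ≤ 2 * (b - a) * ((j:ℝ)+1) := by
    have c1 : a = (b - a) * (a * (a + b)) := by linear_combination (-a) * hdiff
    have c2 : a * (a + b) ≤ 2 * b^2 := by nlinarith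
    calc a = (b - a) * (a * (a + b)) := c1
      _ ≤ (b - a) * (2 * b^2) := by
          exact mul_le_mul_of_nonneg_left c2 hba
      _ = 2 * (b - a) * ((j:ℝ)+1) := by rw [← step1]; ring
  rw [expand]
  have hab0 : 0 < a * b := mul_pos ha hb
  have : 2 * ((b - a) / (a * b)) * (((j:ℝ)+1) * b) = 2 * (b - a) * ((j:ℝ)+1) / a := by
    field_simp
  rw [this, le_div_iff₀ ha]
  linarith [key]


lemma rpow32 (x : ℝ) (hx : 0 ≤ x) : x ^ ((3:ℝ)/2) = x * Real.sqrt x := by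
  rcases eq_or_lt_of_le hx with h | h
  · rw [← h, Real.zero_rpow (by norm_num)]
    simp
  · rw [show (3:ℝ)/2 = 1 + 1/2 by norm_num, Real.rpow_add h, Real.rpow_one,
      ← Real.sqrt_eq_rpow]

lemma inv_xsqrtx_anti {x y : ℝ} (hx : 0 < x) (hxy : x ≤ y) :
    (y * Real.sqrt y)⁻¹ ≤ (x * Real.sqrt x)⁻¹ := by
  have h1 : 0 < x * Real.sqrt x := by positivity
  have h2 : x * Real.sqrt x ≤ y * Real.sqrt y := by
    have := Real.sqrt_le_sqrt hxy
    have := Real.sqrt_nonneg x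
    nlinarith
  exact inv_anti₀ h1 h2

/-- tail sum bound: `∑_{j > n} (1+j)^{-3/2} ≤ 2/√n` -/
lemma tail_bound (n : ℕ) (hn : 1 ≤ n) :
    ∑' k : ℕ, (((1:ℝ) + ((k + (n+1) : ℕ):ℝ)) ^ ((3:ℝ)/2))⁻¹ ≤ 2 * (Real.sqrt n)⁻¹ := by
  have hnonneg : ∀ k : ℕ, 0 ≤ (((1:ℝ) + ((k + (n+1) : ℕ):ℝ)) ^ ((3:ℝ)/2))⁻¹ := by
    intro k; positivity
  apply Real.tsum_le_of_sum_range_le hnonneg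
  intro K
  have per : ∀ k : ℕ, (((1:ℝ) + ((k + (n+1) : ℕ):ℝ)) ^ ((3:ℝ)/2))⁻¹
      ≤ 2 * (Real.sqrt (((k + (n+1) : ℕ):ℝ)))⁻¹ - 2 * (Real.sqrt ((((k+1) + (n+1) : ℕ):ℝ)))⁻¹ := by
    intro k
    have hj : 1 ≤ k + (n+1) := by omega
    have h := inv_pow32_le_telescope (k + (n+1)) hj
    rw [show (-(3:ℝ)/2) = -((3:ℝ)/2) by norm_num, Real.rpow_neg (by positivity)] at h
    have hc : ((((k+1) + (n+1) : ℕ)):ℝ) = ((k + (n+1) : ℕ):ℝ) + 1 := by push_cast; ring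
    rw [hc]
    linarith
  calc ∑ k ∈ Finset.range K, (((1:ℝ) + ((k + (n+1) : ℕ):ℝ)) ^ ((3:ℝ)/2))⁻¹
      ≤ ∑ k ∈ Finset.range K, (2 * (Real.sqrt (((k + (n+1) : ℕ):ℝ)))⁻¹
          - 2 * (Real.sqrt ((((k+1) + (n+1) : ℕ):ℝ)))⁻¹) :=
        Finset.sum_le_sum (fun k _ => per k)
    _ = 2 * (Real.sqrt (((0 + (n+1) : ℕ):ℝ)))⁻¹ - 2 * (Real.sqrt (((K + (n+1) : ℕ):ℝ)))⁻¹ :=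
        Finset.sum_range_sub' (fun k => 2 * (Real.sqrt (((k + (n+1) : ℕ):ℝ)))⁻¹) K
    _ ≤ 2 * (Real.sqrt (((n+1 : ℕ):ℝ)))⁻¹ := by
        have : 0 ≤ 2 * (Real.sqrt (((K + (n+1) : ℕ):ℝ)))⁻¹ := by positivity
        simp only [Nat.zero_add]
        linarith
    _ ≤ 2 * (Real.sqrt (n:ℝ))⁻¹ := by
        have h1 : (0:ℝ) < Real.sqrt (n:ℝ) := Real.sqrt_pos.2 (by exact_mod_cast hn)
        have h2 : Real.sqrt (n:ℝ) ≤ Real.sqrt (((n+1:ℕ)):ℝ) := Real.sqrt_le_sqrt (by push_cast; linarith)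
        gcongr

lemma amgm1 (t w x g : ℝ) (ht : 0 < t) (hw : 0 < w) (hg : 0 ≤ g) :
    g * |x| ≤ (t*(w*x^2) + (1/t)*(g^2 * w⁻¹))/2 := by
  have h2 : (t*(w*x^2) + (1/t)*(g^2 * w⁻¹))/2 = (t^2*w^2*x^2 + g^2)/(2*(t*w)) := by
    field_simp
  rw [h2, le_div_iff₀ (by positivity)]
  have hx2 : t^2*w^2*|x|^2 = t^2*w^2*x^2 := by rw [sq_abs]
  nlinarith [sq_nonneg (t*w*|x| - g), hx2]

lemma amgm2 (s w x : ℝ) (hs : 0 < s) (hw : 0 < w) :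
    |x| ≤ (s*(w*x^2) + (1/s)*w⁻¹)/2 := by
  have h2 : (s*(w*x^2) + (1/s)*w⁻¹)/2 = (s^2*w^2*x^2 + 1)/(2*(s*w)) := by
    field_simp
  rw [h2, le_div_iff₀ (by positivity)]
  have hx2 : s^2*w^2*|x|^2 = s^2*w^2*x^2 := by rw [sq_abs]
  nlinarith [sq_nonneg (s*w*|x| - 1), hx2]

end Stmt0Aux

namespace Stmt0Aux

set_option maxHeartbeats 1600000 in
lemma part1_lemma (f : ℕ → ℝ)
    (hf2 : Summable (fun k : ℕ => (1 + (k : ℝ)) ^ ((3 : ℝ) / 2) * (f k) ^ 2))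
    (n : ℕ) (hn : 2 ≤ n) :
    |∑ k ∈ Finset.range (n+1), (Ecoef (n-k) - Ecoef n) * f k|
      ≤ ((∑' k : ℕ, (1 + (k:ℝ)) ^ ((3:ℝ)/2) * (f k)^2)/2 + 10)
        * (n:ℝ) ^ (-(3:ℝ)/4) * (Real.log (n:ℝ)) ^ ((1:ℝ)/2) := by
  set A := ∑' k : ℕ, (1 + (k:ℝ)) ^ ((3:ℝ)/2) * (f k)^2 with hAdef
  have hterm : ∀ k:ℕ, 0 ≤ (1 + (k:ℝ)) ^ ((3:ℝ)/2) * (f k)^2 := fun k => by positivity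
  have hA0 : 0 ≤ A := tsum_nonneg hterm
  set N := (n:ℝ) with hNdef
  have hN2 : (2:ℝ) ≤ N := by rw [hNdef]; exact_mod_cast hn
  have hN0 : (0:ℝ) < N := by linarith
  set L := Real.log N with hLdef
  have hlog2lb : (0.6931:ℝ) < Real.log 2 := by
    have := Real.log_two_gt_d9; linarith
  have hlog2ub : Real.log 2 < (0.6932:ℝ) := by
    have := Real.log_two_lt_d9; linarith
  have hL2 : Real.log 2 ≤ L := Real.log_le_log (by norm_num) hN2
  have hL0 : (0:ℝ) < L := by linarith
  set rt := Real.sqrt N with hrtdef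
  have hrt0 : 0 < rt := Real.sqrt_pos.2 hN0
  have hrt2 : rt^2 = N := Real.sq_sqrt hN0.le
  -- rpow identities
  have hrt_rpow : rt = N ^ ((1:ℝ)/2) := Real.sqrt_eq_rpow N
  have idP0 : (0:ℝ) < N ^ (-(3:ℝ)/4) := Real.rpow_pos_of_pos hN0 _
  have idL0 : (0:ℝ) < L ^ ((1:ℝ)/2) := Real.rpow_pos_of_pos hL0 _
  have idA : rt⁻¹ * N ^ (-(1:ℝ)/4) = N ^ (-(3:ℝ)/4) := by
    rw [hrt_rpow, ← Real.rpow_neg hN0.le, ← Real.rpow_add hN0]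
    norm_num
  have idB : N ^ ((3:ℝ)/4) * (N * rt)⁻¹ = N ^ (-(3:ℝ)/4) := by
    have : N * rt = N ^ ((3:ℝ)/2) := by
      rw [hrt_rpow]
      nth_rewrite 1 [show N = N ^ (1:ℝ) from (Real.rpow_one N).symm]
      rw [← Real.rpow_add hN0]; norm_num
    rw [this, ← Real.rpow_neg hN0.le, ← Real.rpow_add hN0]
    norm_num
  have idD : L * (L ^ ((1:ℝ)/2))⁻¹ = L ^ ((1:ℝ)/2) := by
    nth_rewrite 1 [show L = L ^ (1:ℝ) from (Real.rpow_one L).symm]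
    rw [← Real.rpow_neg hL0.le, ← Real.rpow_add hL0]
    norm_num
  have idE : (1:ℝ)/2 ≤ L ^ ((1:ℝ)/2) := by
    have h14 : ((1:ℝ)/4) ≤ L := by linarith
    have := Real.rpow_le_rpow (by norm_num : (0:ℝ) ≤ 1/4) h14 (by norm_num : (0:ℝ) ≤ 1/2)
    calc (1:ℝ)/2 = ((1:ℝ)/4) ^ ((1:ℝ)/2) := by
          rw [← Real.sqrt_eq_rpow, show (1/4:ℝ) = (1/2)^2 by norm_num,
            Real.sqrt_sq (by norm_num)]
      _ ≤ L ^ ((1:ℝ)/2) := this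
  have hg0 : ∀ k : ℕ, (0:ℝ) ≤ Ecoef (n-k) - Ecoef n :=
    fun k => sub_nonneg.2 (Ecoef_anti (Nat.sub_le n k))
  set t := N ^ (-(3:ℝ)/4) * L ^ ((1:ℝ)/2) with htdef
  have ht0 : 0 < t := by positivity
  have hw0 : ∀ k:ℕ, (0:ℝ) < (1 + (k:ℝ)) ^ ((3:ℝ)/2) :=
    fun k => Real.rpow_pos_of_pos (by positivity) _
  have hu0 : (0:ℝ) < Real.sqrt (N/2) := Real.sqrt_pos.2 (by linarith)
  have hu2 : (Real.sqrt (N/2))^2 = N/2 := Real.sq_sqrt (by linarith)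
  set u := Real.sqrt (N/2) with hudef
  -- pointwise bound on the weighted squares
  have hpoint : ∀ k ∈ Finset.range (n+1),
      (Ecoef (n-k) - Ecoef n)^2 * ((1 + (k:ℝ)) ^ ((3:ℝ)/2))⁻¹
        ≤ 3*(N^2*rt)⁻¹ + 3*((N*rt)⁻¹ * ((((n-k:ℕ):ℝ)+1))⁻¹) := by
    intro k hk
    have hkn : k ≤ n := Nat.lt_succ_iff.mp (Finset.mem_range.mp hk)
    have hkr : (k:ℝ) ≤ N := by rw [hNdef]; exact_mod_cast hkn
    have hk0 : (0:ℝ) ≤ (k:ℝ) := by positivity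
    have hv0 : (0:ℝ) < Real.sqrt (1+(k:ℝ)) := Real.sqrt_pos.2 (by positivity)
    have hv2 : (Real.sqrt (1+(k:ℝ)))^2 = 1+(k:ℝ) := Real.sq_sqrt (by positivity)
    have hwinv : ((1+(k:ℝ))^((3:ℝ)/2))⁻¹ = ((1+(k:ℝ)) * Real.sqrt (1+(k:ℝ)))⁻¹ := by
      rw [rpow32 _ (by positivity)]
    have hcast : ((n-k:ℕ):ℝ) = N - k := by
      rw [hNdef, Nat.cast_sub hkn]
    by_cases h2k : 2*k ≤ n
    · -- k ≤ n/2 : use the telescoping difference bound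
      have h2kr : 2*(k:ℝ) ≤ N := by rw [hNdef]; exact_mod_cast h2k
      have hbound : Ecoef (n-k) - Ecoef n ≤ (k:ℝ) * (((N/2) * u)⁻¹/2) := by
        have h1 := Ecoef_diff_sum (Nat.sub_le n k)
        refine le_trans h1 ?_
        have hterm' : ∀ j ∈ Finset.Ico (n-k) n,
            (((j:ℝ)+1) * Real.sqrt ((j:ℝ)+1))⁻¹/2 ≤ ((N/2) * u)⁻¹/2 := by
          intro j hj
          have hj1 : n - k ≤ j := (Finset.mem_Ico.mp hj).1
          have hjr : (N/2) ≤ (j:ℝ)+1 := by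
            have hc : ((n-k:ℕ):ℝ) ≤ (j:ℝ) := by exact_mod_cast hj1
            rw [hcast] at hc
            linarith
          have := inv_xsqrtx_anti (show (0:ℝ) < N/2 by linarith) hjr
          rw [hudef]
          linarith
        calc ∑ j ∈ Finset.Ico (n-k) n, (((j:ℝ)+1) * Real.sqrt ((j:ℝ)+1))⁻¹/2
            ≤ ∑ _j ∈ Finset.Ico (n-k) n, ((N/2) * u)⁻¹/2 := Finset.sum_le_sum hterm'
          _ = (k:ℝ) * (((N/2) * u)⁻¹/2) := by
              rw [Finset.sum_const, Nat.card_Ico, nsmul_eq_mul, Nat.sub_sub_self hkn]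
      have hg2 : (Ecoef (n-k) - Ecoef n)^2 ≤ (k:ℝ)^2 * (((N/2)*u)⁻¹/2)^2 := by
        have h := pow_le_pow_left₀ (hg0 k) hbound 2
        rwa [mul_pow] at h
      have e1 : (((N/2)*u)⁻¹/2)^2 = 2/N^3 := by
        have hsq2 : ((N/2)*u)^2 = N^3/8 := by
          rw [mul_pow, hu2]
          ring
        rw [div_pow, inv_pow, hsq2]
        field_simp
        ring
      have hvrt : Real.sqrt (1+(k:ℝ)) ≤ rt := by
        rw [hrtdef]
        apply Real.sqrt_le_sqrt
        linarith
      have key : (k:ℝ)^2 * (2/N^3) * ((1+(k:ℝ)) * Real.sqrt (1+(k:ℝ)))⁻¹ ≤ 3*(N^2*rt)⁻¹ := by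
        have c1 : (k:ℝ)^2 * (2/N^3) * ((1+(k:ℝ)) * Real.sqrt (1+(k:ℝ)))⁻¹
            ≤ (1+(k:ℝ))^2 * (2/N^3) * ((1+(k:ℝ)) * Real.sqrt (1+(k:ℝ)))⁻¹ := by
          gcongr
          nlinarith [hk0]
        have c2 : (1+(k:ℝ))^2 * (2/N^3) * ((1+(k:ℝ)) * Real.sqrt (1+(k:ℝ)))⁻¹
            = (2/N^3) * Real.sqrt (1+(k:ℝ)) := by
          field_simp
          linear_combination -hv2
        have c3 : (2/N^3) * Real.sqrt (1+(k:ℝ)) ≤ (2/N^3) * rt := by gcongr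
        have c4 : (2/N^3) * rt = 2*(N^2*rt)⁻¹ := by
          field_simp
          linear_combination hrt2
        have c5 : (2:ℝ)*(N^2*rt)⁻¹ ≤ 3*(N^2*rt)⁻¹ := by
          have : (0:ℝ) ≤ (N^2*rt)⁻¹ := by positivity
          linarith
        linarith
      have hfinal : (Ecoef (n-k) - Ecoef n)^2 * ((1 + (k:ℝ)) ^ ((3:ℝ)/2))⁻¹
          ≤ 3*(N^2*rt)⁻¹ := by
        rw [hwinv]
        calc (Ecoef (n-k) - Ecoef n)^2 * ((1+(k:ℝ)) * Real.sqrt (1+(k:ℝ)))⁻¹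
            ≤ ((k:ℝ)^2 * (((N/2)*u)⁻¹/2)^2) * ((1+(k:ℝ)) * Real.sqrt (1+(k:ℝ)))⁻¹ := by
              gcongr
          _ = (k:ℝ)^2 * (2/N^3) * ((1+(k:ℝ)) * Real.sqrt (1+(k:ℝ)))⁻¹ := by rw [e1]
          _ ≤ 3*(N^2*rt)⁻¹ := key
      have : (0:ℝ) ≤ 3*((N*rt)⁻¹ * ((((n-k:ℕ):ℝ)+1))⁻¹) := by positivity
      linarith
    · -- k > n/2 : use the crude bound and harmonic weight
      have h2kr : N < 2*(k:ℝ) := by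
        rw [hNdef]
        have : n < 2*k := by omega
        exact_mod_cast this
      have hgE : Ecoef (n-k) - Ecoef n ≤ (Real.sqrt (((n-k:ℕ):ℝ)+1))⁻¹ := by
        have := Ecoef_le_inv_sqrt (n-k)
        have h2 := (Ecoef_pos n).le
        linarith
      have hg2 : (Ecoef (n-k) - Ecoef n)^2 ≤ ((((n-k:ℕ):ℝ))+1)⁻¹ := by
        have h := pow_le_pow_left₀ (hg0 k) hgE 2
        rwa [inv_pow, Real.sq_sqrt (by positivity)] at h
      have hwile : ((1+(k:ℝ)) * Real.sqrt (1+(k:ℝ)))⁻¹ ≤ ((N/2)*u)⁻¹ := by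
        rw [hudef]
        exact inv_xsqrtx_anti (by linarith) (by linarith)
      have hru : rt ≤ (3/2)*u := by
        have e : (3:ℝ)/2 * u = Real.sqrt (((3:ℝ)/2)^2 * (N/2)) := by
          rw [Real.sqrt_mul (sq_nonneg _), Real.sqrt_sq (by norm_num), hudef]
        rw [hrtdef, e]
        exact Real.sqrt_le_sqrt (by nlinarith)
      have hNu3 : ((N/2)*u)⁻¹ ≤ 3*(N*rt)⁻¹ := by
        have h1 : (0:ℝ) < (N/2)*u := by positivity
        have h2 : (0:ℝ) < N*rt := by positivity
        rw [show (3:ℝ)*(N*rt)⁻¹ = ((N*rt)/3)⁻¹ by field_simp]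
        apply inv_anti₀ (by positivity)
        rw [div_le_iff₀ (by norm_num)]
        have h3 := mul_le_mul_of_nonneg_left hru hN0.le
        nlinarith [h3]
      have hfinal : (Ecoef (n-k) - Ecoef n)^2 * ((1 + (k:ℝ)) ^ ((3:ℝ)/2))⁻¹
          ≤ 3*((N*rt)⁻¹ * ((((n-k:ℕ):ℝ)+1))⁻¹) := by
        rw [hwinv]
        calc (Ecoef (n-k) - Ecoef n)^2 * ((1+(k:ℝ)) * Real.sqrt (1+(k:ℝ)))⁻¹
            ≤ ((((n-k:ℕ):ℝ))+1)⁻¹ * (3*(N*rt)⁻¹) := by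
              apply mul_le_mul hg2 (le_trans hwile hNu3) (by positivity) (by positivity)
          _ = 3*((N*rt)⁻¹ * ((((n-k:ℕ):ℝ)+1))⁻¹) := by ring
      have : (0:ℝ) ≤ 3*(N^2*rt)⁻¹ := by positivity
      linarith
  -- sum of the pointwise bounds
  have hSg : ∑ k ∈ Finset.range (n+1),
      (Ecoef (n-k) - Ecoef n)^2 * ((1 + (k:ℝ)) ^ ((3:ℝ)/2))⁻¹ ≤ 20 * ((N * rt)⁻¹ * L) := by
    have hs1 : ∑ k ∈ Finset.range (n+1),
        (Ecoef (n-k) - Ecoef n)^2 * ((1 + (k:ℝ)) ^ ((3:ℝ)/2))⁻¹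
        ≤ ∑ k ∈ Finset.range (n+1),
          (3*(N^2*rt)⁻¹ + 3*((N*rt)⁻¹ * ((((n-k:ℕ):ℝ)+1))⁻¹)) := Finset.sum_le_sum hpoint
    have hreflect : ∑ k ∈ Finset.range (n+1), ((((n-k:ℕ):ℝ))+1)⁻¹
        = ∑ m ∈ Finset.range (n+1), (((m:ℝ))+1)⁻¹ := by
      have h := Finset.sum_range_reflect (fun m : ℕ => (((m:ℝ))+1)⁻¹) (n+1)
      simpa using h
    have hharm : ∑ m ∈ Finset.range (n+1), (((m:ℝ))+1)⁻¹ ≤ 1 + Real.log ((n+1:ℕ):ℝ) := by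
      have := harmonic_le (n+1) (by omega)
      simpa [one_div] using this
    have hlogn1 : Real.log ((n+1:ℕ):ℝ) ≤ Real.log 2 + L := by
      push_cast
      rw [hLdef]
      calc Real.log (N+1) ≤ Real.log (2*N) := Real.log_le_log (by linarith) (by linarith)
        _ = Real.log 2 + Real.log N := Real.log_mul (by norm_num) (ne_of_gt hN0)
    have hs2 : ∑ k ∈ Finset.range (n+1),
        (3*(N^2*rt)⁻¹ + 3*((N*rt)⁻¹ * ((((n-k:ℕ):ℝ)+1))⁻¹))
        = ((n:ℝ)+1) * (3*(N^2*rt)⁻¹) + 3*(N*rt)⁻¹ * ∑ k ∈ Finset.range (n+1), ((((n-k:ℕ):ℝ))+1)⁻¹ := by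
      rw [Finset.sum_add_distrib, Finset.sum_const, Finset.card_range, nsmul_eq_mul]
      have h3 : ∑ k ∈ Finset.range (n+1), 3*((N*rt)⁻¹ * ((((n-k:ℕ):ℝ)+1))⁻¹)
          = 3*(N*rt)⁻¹ * ∑ k ∈ Finset.range (n+1), ((((n-k:ℕ):ℝ))+1)⁻¹ := by
        rw [Finset.mul_sum]
        apply Finset.sum_congr rfl
        intro k _
        ring
      rw [h3]
      push_cast
      ring
    have hc1 : ((n:ℝ)+1) * (3*(N^2*rt)⁻¹) ≤ 6 * (N*rt)⁻¹ := by
      have e : (2*N) * (3*(N^2*rt)⁻¹) = 6 * (N*rt)⁻¹ := by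
        field_simp
        ring
      have h1 : ((n:ℝ)+1) ≤ 2*N := by rw [hNdef] at hN2 ⊢; push_cast; linarith
      have h2 : (0:ℝ) ≤ 3*(N^2*rt)⁻¹ := by positivity
      calc ((n:ℝ)+1) * (3*(N^2*rt)⁻¹) ≤ (2*N) * (3*(N^2*rt)⁻¹) :=
            mul_le_mul_of_nonneg_right h1 h2
        _ = 6 * (N*rt)⁻¹ := e
    have hc2 : 3*(N*rt)⁻¹ * (∑ k ∈ Finset.range (n+1), ((((n-k:ℕ):ℝ))+1)⁻¹)
        ≤ 3*(N*rt)⁻¹ * (1 + Real.log 2 + L) := by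
      have h1 : (0:ℝ) ≤ 3*(N*rt)⁻¹ := by positivity
      apply mul_le_mul_of_nonneg_left _ h1
      rw [hreflect]
      linarith [hharm, hlogn1]
    have hnum : 6 * (N*rt)⁻¹ + 3*(N*rt)⁻¹ * (1 + Real.log 2 + L) ≤ 20 * ((N*rt)⁻¹ * L) := by
      have h1 : (0:ℝ) ≤ (N*rt)⁻¹ := by positivity
      have h2 : 9 + 3*Real.log 2 + 3*L ≤ 20*L := by linarith
      calc 6 * (N*rt)⁻¹ + 3*(N*rt)⁻¹ * (1 + Real.log 2 + L)
          = (N*rt)⁻¹ * (9 + 3*Real.log 2 + 3*L) := by ring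
        _ ≤ (N*rt)⁻¹ * (20*L) := mul_le_mul_of_nonneg_left h2 h1
        _ = 20 * ((N*rt)⁻¹ * L) := by ring
    calc ∑ k ∈ Finset.range (n+1),
          (Ecoef (n-k) - Ecoef n)^2 * ((1 + (k:ℝ)) ^ ((3:ℝ)/2))⁻¹
        ≤ ((n:ℝ)+1) * (3*(N^2*rt)⁻¹) + 3*(N*rt)⁻¹ * ∑ k ∈ Finset.range (n+1), ((((n-k:ℕ):ℝ))+1)⁻¹ := by
          rw [← hs2]; exact hs1
      _ ≤ 6 * (N*rt)⁻¹ + 3*(N*rt)⁻¹ * (1 + Real.log 2 + L) := add_le_add hc1 hc2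
      _ ≤ 20 * ((N*rt)⁻¹ * L) := hnum
  -- Cauchy–Schwarz style splitting via AM–GM
  have hSw : ∑ k ∈ Finset.range (n+1), (1+(k:ℝ))^((3:ℝ)/2) * (f k)^2 ≤ A :=
    Summable.sum_le_tsum _ (fun k _ => hterm k) hf2
  have hstep1 : |∑ k ∈ Finset.range (n+1), (Ecoef (n-k) - Ecoef n) * f k|
      ≤ (t * (∑ k ∈ Finset.range (n+1), (1+(k:ℝ))^((3:ℝ)/2) * (f k)^2)
        + (1/t) * (∑ k ∈ Finset.range (n+1),
            (Ecoef (n-k) - Ecoef n)^2 * ((1+(k:ℝ))^((3:ℝ)/2))⁻¹))/2 := by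
    calc |∑ k ∈ Finset.range (n+1), (Ecoef (n-k) - Ecoef n) * f k|
        ≤ ∑ k ∈ Finset.range (n+1), |(Ecoef (n-k) - Ecoef n) * f k| :=
          Finset.abs_sum_le_sum_abs _ _
      _ = ∑ k ∈ Finset.range (n+1), (Ecoef (n-k) - Ecoef n) * |f k| := by
          apply Finset.sum_congr rfl
          intro k _
          rw [abs_mul, abs_of_nonneg (hg0 k)]
      _ ≤ ∑ k ∈ Finset.range (n+1),
          (t * ((1+(k:ℝ))^((3:ℝ)/2) * (f k)^2)
            + (1/t) * ((Ecoef (n-k) - Ecoef n)^2 * ((1+(k:ℝ))^((3:ℝ)/2))⁻¹))/2 :=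
          Finset.sum_le_sum (fun k _ => amgm1 t _ (f k) _ ht0 (hw0 k) (hg0 k))
      _ = (t * (∑ k ∈ Finset.range (n+1), (1+(k:ℝ))^((3:ℝ)/2) * (f k)^2)
          + (1/t) * (∑ k ∈ Finset.range (n+1),
              (Ecoef (n-k) - Ecoef n)^2 * ((1+(k:ℝ))^((3:ℝ)/2))⁻¹))/2 := by
          rw [← Finset.sum_div, Finset.sum_add_distrib, ← Finset.mul_sum, ← Finset.mul_sum]
  have hfrac : (1/t) * (20 * ((N*rt)⁻¹ * L)) = 20 * (N ^ (-(3:ℝ)/4) * L ^ ((1:ℝ)/2)) := by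
    rw [htdef]
    have ha : (1:ℝ)/(N ^ (-(3:ℝ)/4) * L ^ ((1:ℝ)/2)) = N ^ ((3:ℝ)/4) * (L ^ ((1:ℝ)/2))⁻¹ := by
      rw [one_div, mul_inv, ← Real.rpow_neg hN0.le]
      norm_num
    rw [ha]
    have hb : (N ^ ((3:ℝ)/4) * (L ^ ((1:ℝ)/2))⁻¹) * (20 * ((N*rt)⁻¹ * L))
        = 20 * ((N ^ ((3:ℝ)/4) * (N*rt)⁻¹) * (L * (L ^ ((1:ℝ)/2))⁻¹)) := by ring
    rw [hb, idB, idD]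
  calc |∑ k ∈ Finset.range (n+1), (Ecoef (n-k) - Ecoef n) * f k|
      ≤ (t * (∑ k ∈ Finset.range (n+1), (1+(k:ℝ))^((3:ℝ)/2) * (f k)^2)
        + (1/t) * (∑ k ∈ Finset.range (n+1),
            (Ecoef (n-k) - Ecoef n)^2 * ((1+(k:ℝ))^((3:ℝ)/2))⁻¹))/2 := hstep1
    _ ≤ (t * A + (1/t) * (20 * ((N*rt)⁻¹ * L)))/2 := by gcongr
    _ = (t * A + 20 * (N ^ (-(3:ℝ)/4) * L ^ ((1:ℝ)/2)))/2 := by rw [hfrac]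
    _ = (A/2 + 10) * N ^ (-(3:ℝ)/4) * L ^ ((1:ℝ)/2) := by rw [htdef]; ring


set_option maxHeartbeats 1600000 in
lemma part2_lemma (f : ℕ → ℝ)
    (hf2 : Summable (fun k : ℕ => (1 + (k : ℝ)) ^ ((3 : ℝ) / 2) * (f k) ^ 2))
    (hfabs : Summable (fun k : ℕ => |f k|))
    (hfsum : (∑' k : ℕ, f k) = 0)
    (n : ℕ) (hn : 2 ≤ n) :
    |Ecoef n * (∑ k ∈ Finset.range (n+1), f k)|
      ≤ ((∑' k : ℕ, (1 + (k:ℝ)) ^ ((3:ℝ)/2) * (f k)^2) + 2)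
        * (n:ℝ) ^ (-(3:ℝ)/4) * (Real.log (n:ℝ)) ^ ((1:ℝ)/2) := by
  have hsum_f : Summable f := hfabs.of_abs
  set A := ∑' k : ℕ, (1 + (k:ℝ)) ^ ((3:ℝ)/2) * (f k)^2 with hAdef
  have hterm : ∀ k:ℕ, 0 ≤ (1 + (k:ℝ)) ^ ((3:ℝ)/2) * (f k)^2 := fun k => by positivity
  have hA0 : 0 ≤ A := tsum_nonneg hterm
  set N := (n:ℝ) with hNdef
  have hN2 : (2:ℝ) ≤ N := by rw [hNdef]; exact_mod_cast hn
  have hN0 : (0:ℝ) < N := by linarith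
  set L := Real.log N with hLdef
  have hlog2lb : (0.6931:ℝ) < Real.log 2 := by
    have := Real.log_two_gt_d9; linarith
  have hlog2ub : Real.log 2 < (0.6932:ℝ) := by
    have := Real.log_two_lt_d9; linarith
  have hL2 : Real.log 2 ≤ L := Real.log_le_log (by norm_num) hN2
  have hL0 : (0:ℝ) < L := by linarith
  set rt := Real.sqrt N with hrtdef
  have hrt0 : 0 < rt := Real.sqrt_pos.2 hN0
  have hrt2 : rt^2 = N := Real.sq_sqrt hN0.le
  -- rpow identities
  have hrt_rpow : rt = N ^ ((1:ℝ)/2) := Real.sqrt_eq_rpow N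
  have idP0 : (0:ℝ) < N ^ (-(3:ℝ)/4) := Real.rpow_pos_of_pos hN0 _
  have idL0 : (0:ℝ) < L ^ ((1:ℝ)/2) := Real.rpow_pos_of_pos hL0 _
  have idA : rt⁻¹ * N ^ (-(1:ℝ)/4) = N ^ (-(3:ℝ)/4) := by
    rw [hrt_rpow, ← Real.rpow_neg hN0.le, ← Real.rpow_add hN0]
    norm_num
  have idB : N ^ ((3:ℝ)/4) * (N * rt)⁻¹ = N ^ (-(3:ℝ)/4) := by
    have : N * rt = N ^ ((3:ℝ)/2) := by
      rw [hrt_rpow]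
      nth_rewrite 1 [show N = N ^ (1:ℝ) from (Real.rpow_one N).symm]
      rw [← Real.rpow_add hN0]; norm_num
    rw [this, ← Real.rpow_neg hN0.le, ← Real.rpow_add hN0]
    norm_num
  have idD : L * (L ^ ((1:ℝ)/2))⁻¹ = L ^ ((1:ℝ)/2) := by
    nth_rewrite 1 [show L = L ^ (1:ℝ) from (Real.rpow_one L).symm]
    rw [← Real.rpow_neg hL0.le, ← Real.rpow_add hL0]
    norm_num
  have idE : (1:ℝ)/2 ≤ L ^ ((1:ℝ)/2) := by
    have h14 : ((1:ℝ)/4) ≤ L := by linarith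
    have := Real.rpow_le_rpow (by norm_num : (0:ℝ) ≤ 1/4) h14 (by norm_num : (0:ℝ) ≤ 1/2)
    calc (1:ℝ)/2 = ((1:ℝ)/4) ^ ((1:ℝ)/2) := by
          rw [← Real.sqrt_eq_rpow, show (1/4:ℝ) = (1/2)^2 by norm_num,
            Real.sqrt_sq (by norm_num)]
      _ ≤ L ^ ((1:ℝ)/2) := this
  have hEn : Ecoef n ≤ rt⁻¹ := by
    have h1 := Ecoef_le_inv_sqrt n
    have h2 : rt ≤ Real.sqrt ((n:ℝ)+1) := Real.sqrt_le_sqrt (by rw [hNdef] at hN0 ⊢; linarith)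
    calc Ecoef n ≤ (Real.sqrt ((n:ℝ)+1))⁻¹ := h1
      _ ≤ rt⁻¹ := by gcongr
  set s := N ^ (-(1:ℝ)/4) with hsdef
  have hs0 : 0 < s := Real.rpow_pos_of_pos hN0 _
  have idC : (1/s) * rt⁻¹ = s := by
    rw [hsdef, one_div, ← Real.rpow_neg hN0.le, hrt_rpow, ← Real.rpow_neg hN0.le,
      ← Real.rpow_add hN0]
    norm_num
  have hshift2 : Summable (fun k : ℕ => (1 + ((k + (n+1):ℕ):ℝ)) ^ ((3:ℝ)/2) * (f (k + (n+1)))^2) := by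
    exact_mod_cast (summable_nat_add_iff (n+1)).2 hf2
  have hshiftabs : Summable (fun k : ℕ => |f (k + (n+1))|) := (summable_nat_add_iff (n+1)).2 hfabs
  have htail_eq : ∑ k ∈ Finset.range (n+1), f k = -∑' k, f (k + (n+1)) := by
    have h := Summable.sum_add_tsum_nat_add (f := f) (n+1) hsum_f
    rw [hfsum] at h
    linarith
  have habs_tsum : |∑' k : ℕ, f (k + (n+1))| ≤ ∑' k : ℕ, |f (k + (n+1))| := by
    have := norm_tsum_le_tsum_norm (f := fun k : ℕ => f (k + (n+1))) ?_
    · simpa using this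
    · simpa using hshiftabs
  have hwinv_summable : Summable (fun k : ℕ => (((1:ℝ) + ((k + (n+1):ℕ):ℝ)) ^ ((3:ℝ)/2))⁻¹) := by
    have h := (Real.summable_one_div_nat_rpow (p := (3:ℝ)/2)).2 (by norm_num)
    have base : Summable (fun j : ℕ => (((1:ℝ) + (j:ℝ)) ^ ((3:ℝ)/2))⁻¹) := by
      have h1 := (summable_nat_add_iff 1).2 h
      simp only [one_div] at h1
      convert h1 using 2 with j
      · rfl
      push_cast
      ring_nf
    exact_mod_cast (summable_nat_add_iff (n+1)).2 base
  have hw0 : ∀ j:ℕ, (0:ℝ) < (1 + (j:ℝ)) ^ ((3:ℝ)/2) :=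
    fun j => Real.rpow_pos_of_pos (by positivity) _
  have hptwise : ∀ k:ℕ, |f (k + (n+1))|
      ≤ (s * ((1 + ((k + (n+1):ℕ):ℝ)) ^ ((3:ℝ)/2) * (f (k+(n+1)))^2)
        + (1/s) * (((1:ℝ) + ((k + (n+1):ℕ):ℝ)) ^ ((3:ℝ)/2))⁻¹)/2 :=
    fun k => amgm2 s _ _ hs0 (hw0 _)
  have hsum_rhs : Summable (fun k : ℕ =>
      (s * ((1 + ((k + (n+1):ℕ):ℝ)) ^ ((3:ℝ)/2) * (f (k+(n+1)))^2)
        + (1/s) * (((1:ℝ) + ((k + (n+1):ℕ):ℝ)) ^ ((3:ℝ)/2))⁻¹)/2) :=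
    ((hshift2.mul_left s).add (hwinv_summable.mul_left (1/s))).div_const 2
  have htsum_le : ∑' k : ℕ, |f (k + (n+1))|
      ≤ (s * (∑' k : ℕ, (1 + ((k + (n+1):ℕ):ℝ)) ^ ((3:ℝ)/2) * (f (k+(n+1)))^2)
        + (1/s) * (∑' k : ℕ, (((1:ℝ) + ((k + (n+1):ℕ):ℝ)) ^ ((3:ℝ)/2))⁻¹))/2 := by
    have h1 := Summable.tsum_le_tsum hptwise hshiftabs hsum_rhs
    rwa [tsum_div_const, Summable.tsum_add (hshift2.mul_left s) (hwinv_summable.mul_left (1/s)),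
      tsum_mul_left, tsum_mul_left] at h1
  have htailA : (∑' k : ℕ, (1 + ((k + (n+1):ℕ):ℝ)) ^ ((3:ℝ)/2) * (f (k+(n+1)))^2) ≤ A := by
    have h := Summable.sum_add_tsum_nat_add (f := fun k : ℕ => (1+(k:ℝ))^((3:ℝ)/2) * (f k)^2) (n+1) hf2
    have hpos : (0:ℝ) ≤ ∑ k ∈ Finset.range (n+1), (1+(k:ℝ))^((3:ℝ)/2) * (f k)^2 :=
      Finset.sum_nonneg (fun k _ => hterm k)
    push_cast at h ⊢
    rw [hAdef]
    linarith [h]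
  have htailW : (∑' k : ℕ, (((1:ℝ) + ((k + (n+1):ℕ):ℝ)) ^ ((3:ℝ)/2))⁻¹) ≤ 2 * rt⁻¹ := by
    have := tail_bound n (by omega)
    rw [hrtdef, hNdef]
    exact this
  have hS : |∑ k ∈ Finset.range (n+1), f k| ≤ (s * A + (1/s) * (2 * rt⁻¹))/2 := by
    rw [htail_eq, abs_neg]
    calc |∑' k : ℕ, f (k + (n+1))| ≤ ∑' k : ℕ, |f (k + (n+1))| := habs_tsum
      _ ≤ (s * (∑' k : ℕ, (1 + ((k + (n+1):ℕ):ℝ)) ^ ((3:ℝ)/2) * (f (k+(n+1)))^2)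
        + (1/s) * (∑' k : ℕ, (((1:ℝ) + ((k + (n+1):ℕ):ℝ)) ^ ((3:ℝ)/2))⁻¹))/2 := htsum_le
      _ ≤ (s * A + (1/s) * (2 * rt⁻¹))/2 := by gcongr
  calc |Ecoef n * (∑ k ∈ Finset.range (n+1), f k)|
      = Ecoef n * |∑ k ∈ Finset.range (n+1), f k| := by
        rw [abs_mul, abs_of_pos (Ecoef_pos n)]
    _ ≤ rt⁻¹ * ((s * A + (1/s) * (2 * rt⁻¹))/2) := by
        apply mul_le_mul hEn hS (abs_nonneg _) (by positivity)
    _ = (A + 2)/2 * (rt⁻¹ * s) := by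
        have h1 : (1/s) * (2 * rt⁻¹) = 2 * ((1/s) * rt⁻¹) := by ring
        rw [h1, idC]
        ring
    _ = (A + 2)/2 * N ^ (-(3:ℝ)/4) := by rw [← idA]
    _ ≤ (A + 2) * N ^ (-(3:ℝ)/4) * L ^ ((1:ℝ)/2) := by
        have hP : (0:ℝ) ≤ (A+2) * N ^ (-(3:ℝ)/4) := by positivity
        have h := mul_le_mul_of_nonneg_left idE hP
        nlinarith [h]


end Stmt0Aux

set_option maxHeartbeats 800000 in
open Stmt0Aux in
/-- If `(f_k)` is real with `Σ (1+k)^{3/2} f_k² < ∞` and `Σ f_k = 0` (absolutely convergent),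
and `h_n = Σ_{k=0}^n E_{n-k} f_k`, then `|h_n| ≤ C n^{-3/4} (log n)^{1/2}` for all `n ≥ 2`. -/
theorem stmt0 (f : ℕ → ℝ)
    (hf2 : Summable (fun k : ℕ => (1 + (k : ℝ)) ^ ((3 : ℝ) / 2) * (f k) ^ 2))
    (hfabs : Summable (fun k : ℕ => |f k|))
    (hfsum : (∑' k : ℕ, f k) = 0) :
    ∃ C : ℝ, 0 < C ∧ ∀ n : ℕ, 2 ≤ n →
      |∑ k ∈ Finset.range (n + 1), Ecoef (n - k) * f k|
        ≤ C * (n : ℝ) ^ (-(3 : ℝ) / 4) * (Real.log n) ^ ((1 : ℝ) / 2) := by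
  classical
  set A := ∑' k : ℕ, (1 + (k:ℝ)) ^ ((3:ℝ)/2) * (f k)^2 with hAdef
  have hterm : ∀ k:ℕ, 0 ≤ (1 + (k:ℝ)) ^ ((3:ℝ)/2) * (f k)^2 := fun k => by positivity
  have hA0 : 0 ≤ A := tsum_nonneg hterm
  refine ⟨3*A/2 + 13, by positivity, ?_⟩
  intro n hn
  have hN2 : (2:ℝ) ≤ (n:ℝ) := by exact_mod_cast hn
  have hN0 : (0:ℝ) < (n:ℝ) := by linarith
  have hpos : (0:ℝ) ≤ (n:ℝ) ^ (-(3:ℝ)/4) * (Real.log (n:ℝ)) ^ ((1:ℝ)/2) := by positivity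
  have decomp : ∑ k ∈ Finset.range (n+1), Ecoef (n-k) * f k
      = (∑ k ∈ Finset.range (n+1), (Ecoef (n-k) - Ecoef n) * f k)
        + Ecoef n * (∑ k ∈ Finset.range (n+1), f k) := by
    rw [Finset.mul_sum, ← Finset.sum_add_distrib]
    apply Finset.sum_congr rfl
    intro k _
    ring
  have part1 := part1_lemma f hf2 n hn
  have part2 := part2_lemma f hf2 hfabs hfsum n hn
  rw [← hAdef] at part1 part2
  calc |∑ k ∈ Finset.range (n+1), Ecoef (n-k) * f k|
      ≤ |∑ k ∈ Finset.range (n+1), (Ecoef (n-k) - Ecoef n) * f k|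
        + |Ecoef n * (∑ k ∈ Finset.range (n+1), f k)| := by
        rw [decomp]; exact abs_add_le _ _
    _ ≤ (A/2 + 10) * (n:ℝ) ^ (-(3:ℝ)/4) * (Real.log (n:ℝ)) ^ ((1:ℝ)/2)
        + (A + 2) * (n:ℝ) ^ (-(3:ℝ)/4) * (Real.log (n:ℝ)) ^ ((1:ℝ)/2) := add_le_add part1 part2
    _ ≤ (3*A/2 + 13) * (n:ℝ) ^ (-(3:ℝ)/4) * (Real.log (n:ℝ)) ^ ((1:ℝ)/2) := by nlinarith [hpos]
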